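/- Let F be 0-strongly regular on [0,U) with c = 0. Let q_l*(γ), q_u*(γ) = γ q_l*(γ) be the optimal prices under the γ-ratio constraint (first-order condition γS(γ q_l*) = q_l* f(q_l*)). Then for all γ ≥ 1, q_u*(γ) ≥ q_u*(1), where q_u*(1) is the uniform monopoly price solving S(p) = p f(p); and consequently S(q_u*(γ)) - q_u*(γ) f(q_u*(γ)) ≤ 0, hence q_l*(γ) is non-increasing in γ. -/

import Mathlib

open Set Filter

/-- Let `F` be 0-strongly regular on `[0, U)` with `c = 0`. Let `q_l*(γ)`
and `q_u*(γ) = γ·q_l*(γ)` be the optimal prices under the `γ`-ratio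
constraint (first-order condition `γ·S(γ q_l*) = q_l*·f(q_l*)`), with the
derivative formula `dq_l*/dγ = (S(q_u*) - q_u* f(q_u*)) / D(γ)` where the
denominator `D(γ) = γ²f(γ q_l*) + f(q_l*) + q_l* f'(q_l*)` is positive. Then
for all `γ ≥ 1`, `q_u*(γ) ≥ q_u*(1)` (the uniform monopoly price, solving
`S(p) = p·f(p)`), consequently `S(q_u*(γ)) - q_u*(γ)·f(q_u*(γ)) ≤ 0`, and
hence `q_l*` is non-increasing on `[1, ∞)`. -/
theorem gamma_ratio_upper_geq_uniform
    (U : ℝ) (hU : 0 < U)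
    (f f' S : ℝ → ℝ)
    (hSderiv : ∀ v ∈ Ico 0 U, HasDerivAt S (-(f v)) v)
    (hfderiv : ∀ v ∈ Ico 0 U, HasDerivAt f (f' v) v)
    (hfpos : ∀ v ∈ Ico 0 U, 0 < f v)
    (hSpos : ∀ v ∈ Ico 0 U, 0 < S v)
    (hw : StrictMonoOn (fun v => v - S v / f v) (Ico 0 U))
    (hlim : ∃ L, 0 < L ∧
      Tendsto (fun v => v - S v / f v) (nhdsWithin U (Iio U)) (nhds L))
    (ql : ℝ → ℝ)
    (hrange : ∀ γ ∈ Ici (1 : ℝ), 0 < ql γ ∧ γ * ql γ < U)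
    (hFOC : ∀ γ ∈ Ici (1 : ℝ), γ * S (γ * ql γ) = ql γ * f (ql γ))
    (hdenom : ∀ γ ∈ Ici (1 : ℝ),
      0 < γ ^ 2 * f (γ * ql γ) + f (ql γ) + ql γ * f' (ql γ))
    (hderiv : ∀ γ ∈ Ici (1 : ℝ), HasDerivAt ql
      ((S (γ * ql γ) - γ * ql γ * f (γ * ql γ)) /
        (γ ^ 2 * f (γ * ql γ) + f (ql γ) + ql γ * f' (ql γ))) γ) :
    (∀ γ ∈ Ici (1 : ℝ), 1 * ql 1 ≤ γ * ql γ) ∧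
    (∀ γ ∈ Ici (1 : ℝ), S (γ * ql γ) - γ * ql γ * f (γ * ql γ) ≤ 0) ∧
    AntitoneOn ql (Ici 1) := by
  set qu : ℝ → ℝ := fun γ => γ * ql γ with hqu_def
  -- membership of qu γ in Ico 0 U
  have hqumem : ∀ γ ∈ Ici (1 : ℝ), qu γ ∈ Ico 0 U := by
    intro γ hγ
    have h1 : (1 : ℝ) ≤ γ := hγ
    have hq := hrange γ hγ
    constructor
    · have : 0 < γ * ql γ := mul_pos (lt_of_lt_of_le one_pos h1) hq.1
      exact this.le
    · exact hq.2
  -- derivative of qu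
  have hquderiv : ∀ γ ∈ Ici (1 : ℝ), HasDerivAt qu
      (ql γ + γ * ((S (γ * ql γ) - γ * ql γ * f (γ * ql γ)) /
        (γ ^ 2 * f (γ * ql γ) + f (ql γ) + ql γ * f' (ql γ)))) γ := by
    intro γ hγ
    have h := (hasDerivAt_id' γ).fun_mul (hderiv γ hγ)
    simpa [hqu_def, one_mul] using h
  -- the uniform monopoly price facts
  have h1mem : (1 : ℝ) ∈ Ici (1 : ℝ) := Set.self_mem_Ici
  have hql1pos : 0 < ql 1 := (hrange 1 h1mem).1
  have hql1mem : ql 1 ∈ Ico 0 U := by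
    have := hqumem 1 h1mem
    simpa [hqu_def] using this
  have hfoc1 : S (ql 1) = ql 1 * f (ql 1) := by
    have := hFOC 1 h1mem
    simpa using this
  have hw1 : ql 1 - S (ql 1) / f (ql 1) = 0 := by
    rw [hfoc1]
    field_simp [(hfpos _ hql1mem).ne']
    ring
  -- key claim
  have key : ∀ γ ∈ Ici (1 : ℝ), ql 1 ≤ qu γ := by
    intro γ₀ hγ₀
    by_contra hcon
    push_neg at hcon
    have h1γ₀ : (1 : ℝ) ≤ γ₀ := hγ₀
    -- the set where qu ≥ qu 1
    set B : Set ℝ := Icc 1 γ₀ ∩ qu ⁻¹' (Ici (ql 1)) with hB_def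
    have hcont : ContinuousOn qu (Icc 1 γ₀) := fun x hx =>
      ((hquderiv x hx.1).continuousAt).continuousWithinAt
    have h1B : (1 : ℝ) ∈ B := by
      refine ⟨⟨le_rfl, h1γ₀⟩, ?_⟩
      simp [hqu_def]
    have hBclosed : IsClosed B :=
      hcont.preimage_isClosed_of_isClosed isClosed_Icc isClosed_Ici
    have hBcompact : IsCompact B :=
      isCompact_Icc.of_isClosed_subset hBclosed inter_subset_left
    obtain hstar := hBcompact.sSup_mem ⟨1, h1B⟩
    set γs : ℝ := sSup B with hγs_def
    have hγs1 : (1 : ℝ) ≤ γs := hstar.1.1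
    have hγsγ₀ : γs ≤ γ₀ := hstar.1.2
    have hquγs : ql 1 ≤ qu γs := hstar.2
    have hγslt : γs < γ₀ := by
      rcases lt_or_eq_of_le hγsγ₀ with h | h
      · exact h
      · exact absurd hquγs (by rw [h]; exact not_le.2 hcon)
    -- qu is strictly increasing on [γs, γ₀]
    have hmono : StrictMonoOn qu (Icc γs γ₀) := by
      apply strictMonoOn_of_deriv_pos (convex_Icc _ _)
      · exact hcont.mono (Icc_subset_Icc hγs1 le_rfl)
      · intro x hx
        rw [interior_Icc] at hx
        have hx1 : (1 : ℝ) ≤ x := le_trans hγs1 hx.1.le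
        have hxI : x ∈ Ici (1 : ℝ) := hx1
        have hxIcc : x ∈ Icc (1 : ℝ) γ₀ := ⟨hx1, hx.2.le⟩
        -- qu x < ql 1, since otherwise x ∈ B and x ≤ γs
        have hqux : qu x < ql 1 := by
          by_contra hle
          push_neg at hle
          have : x ∈ B := ⟨hxIcc, hle⟩
          exact absurd (le_csSup hBcompact.bddAbove this) (not_le.2 hx.1)
        -- hence w(qu x) < w(ql 1) = 0
        have hwlt : qu x - S (qu x) / f (qu x) < 0 := by
          have := hw (hqumem x hxI) hql1mem hqux
          simpa [hw1] using this
        have hfqux : 0 < f (qu x) := hfpos _ (hqumem x hxI)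
        have hnum : 0 < S (qu x) - qu x * f (qu x) := by
          have h1 : qu x < S (qu x) / f (qu x) := by linarith
          have h2 : qu x * f (qu x) < S (qu x) := by
            rw [lt_div_iff₀ hfqux] at h1
            linarith
          linarith
        have hD := hdenom x hxI
        have hqlx := (hrange x hxI).1
        have hderivpos : 0 < ql x + x * ((S (x * ql x) - x * ql x * f (x * ql x)) /
            (x ^ 2 * f (x * ql x) + f (ql x) + ql x * f' (ql x))) := by
          have hfrac : 0 < (S (x * ql x) - x * ql x * f (x * ql x)) /
              (x ^ 2 * f (x * ql x) + f (ql x) + ql x * f' (ql x)) :=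
            div_pos (by simpa [hqu_def] using hnum) hD
          have hxpos : 0 < x := lt_of_lt_of_le one_pos hx1
          positivity
        rw [(hquderiv x hxI).deriv]
        exact hderivpos
    have : qu γs < qu γ₀ :=
      hmono ⟨le_rfl, hγsγ₀⟩ ⟨hγsγ₀, le_rfl⟩ hγslt
    linarith
  -- second conjunct
  have part2 : ∀ γ ∈ Ici (1 : ℝ), S (γ * ql γ) - γ * ql γ * f (γ * ql γ) ≤ 0 := by
    intro γ hγ
    have hmem := hqumem γ hγ
    have hwge : 0 ≤ qu γ - S (qu γ) / f (qu γ) := by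
      have := hw.monotoneOn hql1mem hmem (key γ hγ)
      simpa [hw1] using this
    have hfq : 0 < f (qu γ) := hfpos _ hmem
    have h1 : S (qu γ) / f (qu γ) ≤ qu γ := by linarith
    have h2 : S (qu γ) ≤ qu γ * f (qu γ) := by
      rw [div_le_iff₀ hfq] at h1
      linarith
    simpa [hqu_def] using sub_nonpos.2 h2
  refine ⟨?_, part2, ?_⟩
  · intro γ hγ
    simpa [hqu_def, one_mul] using key γ hγ
  · -- AntitoneOn ql (Ici 1)
    apply antitoneOn_of_deriv_nonpos (convex_Ici 1)
    · exact fun x hx => ((hderiv x hx).continuousAt).continuousWithinAt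
    · intro x hx
      rw [interior_Ici] at hx
      exact ((hderiv x (Set.mem_Ici.mpr (le_of_lt hx))).differentiableAt).differentiableWithinAt
    · intro x hx
      rw [interior_Ici] at hx
      have hxI : x ∈ Ici (1 : ℝ) := Set.mem_Ici.mpr (le_of_lt hx)
      rw [(hderiv x hxI).deriv]
      exact div_nonpos_of_nonpos_of_nonneg (part2 x hxI) (hdenom x hxI).le
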